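/- The polynomial H₁(u,v,w) = u·v²·w² - u²·v·w - u·v²·w - u·v·w² + u²·v + 3·u·v·w - u·v - u·w - v·w + w is irreducible in ℂ[u,v,w]. -/

import Mathlib

open MvPolynomial

noncomputable section StmtAux

namespace Stmt1Aux

abbrev R2 := MvPolynomial (Fin 2) ℂ
abbrev S1 := MvPolynomial (Fin 1) ℂ

def Ac : R2 := X 0 * (1 - X 1)
def Bc : R2 := X 0^2 * X 1^2 - X 0^2 * X 1 - X 0 * X 1^2 + 3*(X 0 * X 1) - X 0 - X 1
def Cc : R2 := X 1 * (1 - X 0)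

lemma himage :
    (finSuccEquiv ℂ 2)
      (X 0 * X 1 ^ 2 * X 2 ^ 2 - X 0 ^ 2 * X 1 * X 2 - X 0 * X 1 ^ 2 * X 2
        - X 0 * X 1 * X 2 ^ 2 + X 0 ^ 2 * X 1 + 3 * (X 0 * X 1 * X 2)
        - X 0 * X 1 - X 0 * X 2 - X 1 * X 2 + X 2 :
        MvPolynomial (Fin 3) ℂ)
    = Polynomial.C Ac * Polynomial.X ^ 2 + Polynomial.C Bc * Polynomial.X + Polynomial.C Cc := by
  have h1 : (X 1 : MvPolynomial (Fin 3) ℂ) = X (0 : Fin 2).succ := rfl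
  have h2 : (X 2 : MvPolynomial (Fin 3) ℂ) = X (1 : Fin 2).succ := rfl
  simp only [Ac, Bc, Cc, h1, h2, map_add, map_sub, map_mul, map_pow, map_ofNat, map_one,
    finSuccEquiv_X_zero, finSuccEquiv_X_succ, Polynomial.C_sub, Polynomial.C_add,
    Polynomial.C_mul, Polynomial.C_pow, Polynomial.C_1]
  ring

/-! ### Primes in `R2` -/

lemma prime_X0_S : Prime (X 0 : S1) := by
  rw [← MulEquiv.prime_iff (finSuccEquiv ℂ 0).toMulEquiv]
  have : (finSuccEquiv ℂ 0).toMulEquiv (X 0) = Polynomial.X := finSuccEquiv_X_zero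
  rw [this]
  exact Polynomial.prime_X

lemma prime_one_sub_X0_S : Prime (1 - X 0 : S1) := by
  rw [← MulEquiv.prime_iff (finSuccEquiv ℂ 0).toMulEquiv]
  have : (finSuccEquiv ℂ 0).toMulEquiv (1 - X 0 : S1) = 1 - Polynomial.X := by
    show (finSuccEquiv ℂ 0) (1 - X 0 : S1) = _
    rw [map_sub, map_one, finSuccEquiv_X_zero]
  rw [this]
  have h := (Polynomial.prime_X_sub_C (1 : MvPolynomial (Fin 0) ℂ)).neg
  simpa using h

lemma prime_X0 : Prime (X 0 : R2) := by
  rw [← MulEquiv.prime_iff (finSuccEquiv ℂ 1).toMulEquiv]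
  have : (finSuccEquiv ℂ 1).toMulEquiv (X 0 : R2) = Polynomial.X := finSuccEquiv_X_zero
  rw [this]
  exact Polynomial.prime_X

lemma prime_one_sub_X1 : Prime (1 - X 1 : R2) := by
  rw [← MulEquiv.prime_iff (finSuccEquiv ℂ 1).toMulEquiv]
  have : (finSuccEquiv ℂ 1).toMulEquiv (1 - X 1 : R2) = Polynomial.C (1 - X 0) := by
    show (finSuccEquiv ℂ 1) (1 - X 1 : R2) = _
    have h1 : (X 1 : R2) = X (0 : Fin 1).succ := rfl
    rw [map_sub, map_one, h1, finSuccEquiv_X_succ, map_sub, map_one]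
  rw [this, Polynomial.prime_C_iff]
  exact prime_one_sub_X0_S

lemma not_X0_dvd_X1 : ¬ (X 0 : R2) ∣ X 1 := by
  intro h
  have h2 := (MvPolynomial.eval (fun i => if i = 0 then (0:ℂ) else 1)).map_dvd h
  simp at h2

lemma not_one_sub_X1_dvd : ¬ (1 - X 1 : R2) ∣ (1 - X 0) := by
  intro h
  have h2 := (MvPolynomial.eval (fun i => if i = 0 then (0:ℂ) else 1)).map_dvd h
  simp at h2

/-- A nonzero nonunit of `ℂ[v,w]` cannot divide both `v(1-w)` and `w(1-v)`. -/
lemma aux_const (f : R2) (hf0 : f ≠ 0) (hfu : ¬IsUnit f)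
    (h1 : f ∣ X 0 * (1 - X 1)) (h2 : f ∣ X 1 * (1 - X 0)) : False := by
  obtain ⟨q, hqirr, hqf⟩ := WfDvdMonoid.exists_irreducible_factor hfu hf0
  have hq : Prime q := UniqueFactorizationMonoid.irreducible_iff_prime.mp hqirr
  have d1 : q ∣ X 0 * (1 - X 1) := hqf.trans h1
  have d2 : q ∣ X 1 * (1 - X 0) := hqf.trans h2
  rcases hq.2.2 _ _ d1 with c1 | c1 <;> rcases hq.2.2 _ _ d2 with c2 | c2
  · exact not_X0_dvd_X1 (((hq.associated_of_dvd prime_X0 c1).symm.dvd).trans c2)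
  · have : q ∣ 1 := by
      have := dvd_add c1 c2
      simpa using this
    exact hq.not_unit (isUnit_of_dvd_one this)
  · have : q ∣ 1 := by
      have := dvd_add c2 c1
      simpa using this
    exact hq.not_unit (isUnit_of_dvd_one this)
  · exact not_one_sub_X1_dvd (((hq.associated_of_dvd prime_one_sub_X1 c1).symm.dvd).trans c2)

/-! ### The discriminant is not a square -/

def c0 : S1 := X 0^2
def c1 : S1 := 2*X 0^3 - 2*X 0^2 - 2*X 0
def c2 : S1 := X 0^4 - 8*X 0^3 + 9*X 0^2 - 2*X 0 + 1
def c3 : S1 := -2*X 0^4 + 8*X 0^3 - 8*X 0^2 + 2*X 0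
def c4 : S1 := X 0^4 - 2*X 0^3 + X 0^2

def Q : Polynomial S1 :=
  Polynomial.C c0 + Polynomial.C c1 * Polynomial.X + Polynomial.C c2 * Polynomial.X^2
    + Polynomial.C c3 * Polynomial.X^3 + Polynomial.C c4 * Polynomial.X^4

lemma qimage : (finSuccEquiv ℂ 1) (Bc^2 - 4*(Ac*Cc)) = Q := by
  have h1 : (X 1 : R2) = X (0 : Fin 1).succ := rfl
  simp only [Ac, Bc, Cc, Q, c0, c1, c2, c3, c4, h1, map_add, map_sub, map_mul, map_pow,
    map_ofNat, map_one, map_neg, finSuccEquiv_X_zero, finSuccEquiv_X_succ, Polynomial.C_sub,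
    Polynomial.C_add, Polynomial.C_mul, Polynomial.C_pow, Polynomial.C_1, Polynomial.C_neg]
  ring

lemma c4_ne : c4 ≠ 0 := by
  intro h
  have h2 := congrArg (MvPolynomial.eval (fun _ => (2:ℂ))) h
  simp [c4] at h2
  norm_num at h2

lemma Qcoeff0 : Q.coeff 0 = c0 := by
  simp [Q, Polynomial.coeff_X_pow, Polynomial.coeff_one, Polynomial.coeff_C]
lemma Qcoeff1 : Q.coeff 1 = c1 := by
  simp [Q, Polynomial.coeff_X_pow, Polynomial.coeff_one, Polynomial.coeff_C]
lemma Qcoeff3 : Q.coeff 3 = c3 := by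
  simp [Q, Polynomial.coeff_X_pow, Polynomial.coeff_one, Polynomial.coeff_C]
lemma Qcoeff4 : Q.coeff 4 = c4 := by
  simp [Q, Polynomial.coeff_X_pow, Polynomial.coeff_one, Polynomial.coeff_C]

lemma Qdeg : Q.natDegree = 4 := by
  unfold Q
  compute_degree!
  exact c4_ne

/-- The discriminant `B² - 4AC` is not a square in `ℂ[v,w]`. -/
lemma aux_sq (t : R2) (h : t^2 = Bc^2 - 4*(Ac*Cc)) : False := by
  set s : Polynomial S1 := (finSuccEquiv ℂ 1) t with hs
  have hsq : s^2 = Q := by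
    rw [hs, ← map_pow, h, qimage]
  have hQ0 : Q ≠ 0 := by
    intro h0
    have := Qcoeff4
    rw [h0] at this
    exact c4_ne (by simpa using this.symm)
  have hs0 : s ≠ 0 := by
    intro h0
    rw [h0] at hsq
    exact hQ0 (by simpa using hsq.symm)
  have hdeg : s.natDegree = 2 := by
    have : (s*s).natDegree = s.natDegree + s.natDegree := Polynomial.natDegree_mul hs0 hs0
    rw [← sq, hsq, Qdeg] at this
    omega
  have hc3 : s.coeff 3 = 0 := Polynomial.coeff_eq_zero_of_natDegree_lt (by omega)
  have hc4 : s.coeff 4 = 0 := Polynomial.coeff_eq_zero_of_natDegree_lt (by omega)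
  have hcoeff : ∀ k, Q.coeff k = ∑ x ∈ Finset.range (k+1), s.coeff x * s.coeff (k - x) := by
    intro k
    rw [← hsq, sq, Polynomial.coeff_mul, Finset.Nat.sum_antidiagonal_eq_sum_range_succ_mk]
  have h0 : c0 = s.coeff 0 * s.coeff 0 := by
    have := hcoeff 0; rwa [Qcoeff0, Finset.sum_range_one] at this
  have h1 : c1 = s.coeff 0 * s.coeff 1 + s.coeff 1 * s.coeff 0 := by
    have := hcoeff 1; rw [Qcoeff1] at this
    simpa [Finset.sum_range_succ] using this
  have h3 : c3 = s.coeff 1 * s.coeff 2 + s.coeff 2 * s.coeff 1 := by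
    have := hcoeff 3; rw [Qcoeff3] at this
    simpa [Finset.sum_range_succ, hc3] using this
  have h4 : c4 = s.coeff 2 * s.coeff 2 := by
    have := hcoeff 4; rw [Qcoeff4] at this
    simpa [Finset.sum_range_succ, hc3, hc4] using this
  have hkey : c1^2 * c4 = c3^2 * c0 := by
    rw [h0, h1, h3, h4]; ring
  have h2 := congrArg (MvPolynomial.eval (fun _ => (-1:ℂ))) hkey
  simp [c0, c1, c3, c4] at h2
  norm_num at h2

/-! ### Irreducibility over `Polynomial R2` -/

lemma Ac_ne : Ac ≠ 0 := by
  intro h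
  have h2 := congrArg (MvPolynomial.eval (fun _ => (-1:ℂ))) h
  simp [Ac] at h2

def P : Polynomial R2 :=
  Polynomial.C Ac * Polynomial.X ^ 2 + Polynomial.C Bc * Polynomial.X + Polynomial.C Cc

lemma Pdeg : P.natDegree = 2 := by
  unfold P
  compute_degree!
  exact Ac_ne

lemma Pcoeff0 : P.coeff 0 = Cc := by
  simp [P, Polynomial.coeff_X_pow, Polynomial.coeff_C]
lemma Pcoeff1 : P.coeff 1 = Bc := by
  simp [P, Polynomial.coeff_X_pow, Polynomial.coeff_C]
lemma Pcoeff2 : P.coeff 2 = Ac := by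
  simp [P, Polynomial.coeff_X_pow, Polynomial.coeff_C]

lemma P_ne : P ≠ 0 := by
  intro h
  have := Pcoeff2
  rw [h] at this
  exact Ac_ne (by simpa using this.symm)

lemma P_irred : Irreducible P := by
  constructor
  · intro hu
    have := Polynomial.natDegree_eq_zero_of_isUnit hu
    rw [Pdeg] at this
    exact two_ne_zero this
  · intro F G hFG
    by_contra hcon
    push_neg at hcon
    obtain ⟨hF, hG⟩ := hcon
    have hF0 : F ≠ 0 := by rintro rfl; exact P_ne (by simpa using hFG)
    have hG0 : G ≠ 0 := by rintro rfl; exact P_ne (by simpa using hFG)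
    have hsum : F.natDegree + G.natDegree = 2 := by
      rw [← Polynomial.natDegree_mul hF0 hG0, ← hFG, Pdeg]
    have e0 : F.coeff 0 * G.coeff 0 = Cc := by
      rw [← Pcoeff0, hFG, Polynomial.mul_coeff_zero]
    rcases (by omega : F.natDegree = 0 ∨ G.natDegree = 0 ∨
        (F.natDegree = 1 ∧ G.natDegree = 1)) with hd | hd | ⟨hdF, hdG⟩
    · obtain ⟨f, hf⟩ := Polynomial.natDegree_eq_zero.mp hd
      have hfu : ¬IsUnit f := fun h => hF (hf ▸ (Polynomial.isUnit_C.mpr h))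
      have hf0 : f ≠ 0 := by rintro rfl; simp at hf; exact hF0 hf.symm
      have hdvd : ∀ k, f ∣ P.coeff k := by
        intro k
        rw [hFG, ← hf, Polynomial.coeff_C_mul]
        exact Dvd.intro _ rfl
      exact aux_const f hf0 hfu (by show f ∣ Ac; rw [← Pcoeff2]; exact hdvd 2)
        (by show f ∣ Cc; rw [← Pcoeff0]; exact hdvd 0)
    · obtain ⟨g, hg⟩ := Polynomial.natDegree_eq_zero.mp hd
      have hgu : ¬IsUnit g := fun h => hG (hg ▸ (Polynomial.isUnit_C.mpr h))
      have hg0 : g ≠ 0 := by rintro rfl; simp at hg; exact hG0 hg.symm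
      have hdvd : ∀ k, g ∣ P.coeff k := by
        intro k
        rw [hFG, ← hg, mul_comm, Polynomial.coeff_C_mul]
        exact Dvd.intro _ rfl
      exact aux_const g hg0 hgu (by show g ∣ Ac; rw [← Pcoeff2]; exact hdvd 2)
        (by show g ∣ Cc; rw [← Pcoeff0]; exact hdvd 0)
    · -- two linear factors: discriminant is a square
      have hF2 : F.coeff 2 = 0 := Polynomial.coeff_eq_zero_of_natDegree_lt (by omega)
      have hG2 : G.coeff 2 = 0 := Polynomial.coeff_eq_zero_of_natDegree_lt (by omega)
      have e2 : F.coeff 1 * G.coeff 1 = Ac := by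
        have h' : P.coeff 2 = ∑ x ∈ Finset.range 3, F.coeff x * G.coeff (2 - x) := by
          rw [hFG, Polynomial.coeff_mul, Finset.Nat.sum_antidiagonal_eq_sum_range_succ_mk]
        rw [Pcoeff2] at h'
        simp [Finset.sum_range_succ, hF2, hG2] at h'
        rw [h']
      have e1 : F.coeff 0 * G.coeff 1 + F.coeff 1 * G.coeff 0 = Bc := by
        have h' : P.coeff 1 = ∑ x ∈ Finset.range 2, F.coeff x * G.coeff (1 - x) := by
          rw [hFG, Polynomial.coeff_mul, Finset.Nat.sum_antidiagonal_eq_sum_range_succ_mk]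
        rw [Pcoeff1] at h'
        simp only [Finset.sum_range_succ, Finset.sum_range_zero, zero_add, Nat.sub_zero,
          Nat.sub_self] at h'
        rw [h']
      exact aux_sq (F.coeff 1 * G.coeff 0 - F.coeff 0 * G.coeff 1)
        (by rw [← e0, ← e1, ← e2]; ring)

end Stmt1Aux
end StmtAux

theorem stmt_1 :
    Irreducible
      (X 0 * X 1 ^ 2 * X 2 ^ 2 - X 0 ^ 2 * X 1 * X 2 - X 0 * X 1 ^ 2 * X 2
        - X 0 * X 1 * X 2 ^ 2 + X 0 ^ 2 * X 1 + 3 * (X 0 * X 1 * X 2)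
        - X 0 * X 1 - X 0 * X 2 - X 1 * X 2 + X 2 :
        MvPolynomial (Fin 3) ℂ) := by
  have h := Stmt1Aux.P_irred
  rw [← MulEquiv.irreducible_iff (finSuccEquiv ℂ 2)]
  rw [show ((finSuccEquiv ℂ 2) (X 0 * X 1 ^ 2 * X 2 ^ 2 - X 0 ^ 2 * X 1 * X 2
      - X 0 * X 1 ^ 2 * X 2 - X 0 * X 1 * X 2 ^ 2 + X 0 ^ 2 * X 1 + 3 * (X 0 * X 1 * X 2)
      - X 0 * X 1 - X 0 * X 2 - X 1 * X 2 + X 2 : MvPolynomial (Fin 3) ℂ))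
    = Stmt1Aux.P from Stmt1Aux.himage]
  exact h
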